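/- Let D be a division ring and let N be a finite subgroup of the unit group D^*. If N is nilpotent of class at most 2 (i.e. the commutator subgroup of N is contained in the center of N), then either N is cyclic, or N is isomorphic to Q_8 × C, where Q_8 is the quaternion group of order 8 and C is a cyclic group. -/

import Mathlib

universe u

namespace Stmt4

open Subgroup

open scoped commutatorElement

variable {G : Type*} [Group G]

section Identities

lemma swap_eq (a b : G) : a * b = ⁅a, b⁆ * (b * a) := by
  simp only [commutatorElement_def]; group

variable (hc : ∀ a b g : G, Commute ⁅a, b⁆ g)

include hc

lemma K_mul_left (a b y : G) : ⁅a * b, y⁆ = ⁅a, y⁆ * ⁅b, y⁆ := by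
  have h2 : a * ⁅b, y⁆ = ⁅b, y⁆ * a := ((hc b y a).eq).symm
  have : ⁅a * b, y⁆ = a * (⁅b, y⁆ * y) * a⁻¹ * y⁻¹ := by
    simp only [commutatorElement_def]; group
  rw [this, ← mul_assoc a, h2]
  calc ⁅b, y⁆ * a * y * a⁻¹ * y⁻¹ = ⁅b, y⁆ * ⁅a, y⁆ := by
        simp only [commutatorElement_def]; group
    _ = ⁅a, y⁆ * ⁅b, y⁆ := (hc b y ⁅a, y⁆).eq

lemma K_inv_left (a y : G) : ⁅a⁻¹, y⁆ = ⁅a, y⁆⁻¹ := by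
  have h : ⁅a⁻¹ * a, y⁆ = ⁅a⁻¹, y⁆ * ⁅a, y⁆ := K_mul_left hc a⁻¹ a y
  rw [inv_mul_cancel, commutatorElement_one_left] at h
  exact eq_inv_of_mul_eq_one_left h.symm

lemma K_mul_right (a b y : G) : ⁅a, b * y⁆ = ⁅a, b⁆ * ⁅a, y⁆ := by
  have key : ⁅a, b * y⁆ = ⁅y, a⁻¹⁆ * ⁅a, b⁆ := by
    have h2 : ∀ g : G, ⁅y, a⁻¹⁆ * g = g * ⁅y, a⁻¹⁆ := fun g => (hc y a⁻¹ g).eq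
    have expand : ⁅a, b * y⁆ = a * b * ⁅y, a⁻¹⁆ * a⁻¹ * b⁻¹ := by
      simp only [commutatorElement_def]; group
    rw [expand, show a * b * ⁅y, a⁻¹⁆ = ⁅y, a⁻¹⁆ * (a * b) from (h2 (a*b)).symm]
    simp only [commutatorElement_def]; group
  rw [key]
  have : ⁅y, a⁻¹⁆ = ⁅a, y⁆ := by
    rw [← commutatorElement_inv, K_inv_left hc, inv_inv]
  rw [this]
  exact (hc a y ⁅a,b⁆).eq.symm ▸ ((hc a b ⁅a,y⁆).eq).symm

lemma K_pow_left (a y : G) (n : ℕ) : ⁅a ^ n, y⁆ = ⁅a, y⁆ ^ n := by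
  induction n with
  | zero => simp
  | succ n ih => rw [pow_succ, K_mul_left hc, ih, pow_succ]

lemma K_pow_right (a y : G) (n : ℕ) : ⁅a, y ^ n⁆ = ⁅a, y⁆ ^ n := by
  induction n with
  | zero => simp
  | succ n ih => rw [pow_succ, K_mul_right hc, ih, pow_succ]

lemma K_inv_right (a y : G) : ⁅a, y⁻¹⁆ = ⁅a, y⁆⁻¹ := by
  have h : ⁅a, y⁻¹ * y⁆ = ⁅a, y⁻¹⁆ * ⁅a, y⁆ := K_mul_right hc a y⁻¹ y
  rw [inv_mul_cancel, commutatorElement_one_right] at h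
  exact eq_inv_of_mul_eq_one_left h.symm

lemma K_pow_self (y : G) (k : ℕ) : ⁅y ^ k, y⁆ = 1 := by
  rw [K_pow_left hc, commutatorElement_self, one_pow]

lemma pow_formula (a b : G) (n : ℕ) :
    (a * b) ^ n = ⁅b, a⁆ ^ n.choose 2 * a ^ n * b ^ n := by
  induction n with
  | zero => simp
  | succ n ih =>
    have hswap : b ^ n * a = ⁅b, a⁆ ^ n * (a * b ^ n) := by
      rw [← K_pow_left hc]; exact swap_eq (b ^ n) a
    have hch : (n + 1).choose 2 = n.choose 2 + n := by
      rw [Nat.choose_succ_succ, Nat.choose_one_right, Nat.add_comm]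
    rw [pow_succ, ih, hch, pow_add]
    have hmove : a ^ n * ⁅b, a⁆ ^ n = ⁅b, a⁆ ^ n * a ^ n :=
      ((hc b a (a ^ n)).pow_left n).eq.symm
    calc ⁅b, a⁆ ^ n.choose 2 * a ^ n * b ^ n * (a * b)
        = ⁅b, a⁆ ^ n.choose 2 * (a ^ n * (b ^ n * a * b)) := by
          simp only [mul_assoc]
      _ = ⁅b, a⁆ ^ n.choose 2 * (a ^ n * (⁅b, a⁆ ^ n * (a * b ^ n) * b)) := by
          rw [hswap]
      _ = ⁅b, a⁆ ^ n.choose 2 * (a ^ n * ⁅b, a⁆ ^ n * (a * b ^ n * b)) := by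
          simp only [mul_assoc]
      _ = ⁅b, a⁆ ^ n.choose 2 * (⁅b, a⁆ ^ n * a ^ n * (a * b ^ n * b)) := by
          rw [hmove]
      _ = ⁅b, a⁆ ^ n.choose 2 * ⁅b, a⁆ ^ n * (a ^ n * a) * (b ^ n * b) := by
          simp only [mul_assoc]
      _ = ⁅b, a⁆ ^ n.choose 2 * ⁅b, a⁆ ^ n * a ^ (n + 1) * b ^ (n + 1) := by
          rw [← pow_succ, ← pow_succ]

lemma K_eq_one_of_left_pow {c x : G} (y : G) (hcen : ∀ g : G, Commute c g)
    (h : ∃ k : ℕ, c ^ k = x) : ⁅x, y⁆ = 1 := by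
  obtain ⟨k, rfl⟩ := h
  rw [K_pow_left hc]
  rw [commutatorElement_eq_one_iff_commute.2 (hcen y), one_pow]

lemma K_eq_one_of_pow_left {x y : G} (h : ∃ k : ℕ, y ^ k = x) : ⁅x, y⁆ = 1 := by
  obtain ⟨k, rfl⟩ := h
  exact K_pow_self hc y k

lemma K_eq_one_of_pow_right {x y : G} (h : ∃ k : ℕ, x ^ k = y) : ⁅x, y⁆ = 1 := by
  obtain ⟨k, rfl⟩ := h
  rw [K_pow_right hc, commutatorElement_self, one_pow]

end Identities



section FiniteStuff
variable [Finite G]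

lemma zpow_to_pow (w : G) (k : ℤ) : ∃ m : ℕ, w ^ m = w ^ k := by
  refine ⟨(k % (orderOf w : ℤ)).toNat, ?_⟩
  have hpos : (0:ℤ) < (orderOf w : ℤ) := by exact_mod_cast orderOf_pos w
  rw [← zpow_natCast, Int.toNat_of_nonneg (Int.emod_nonneg k hpos.ne'), zpow_mod_orderOf]

lemma modinv (u : G) {s t : ℕ} (hgcd : Nat.gcd s t = 1) (hu : u ^ t = 1) :
    ∃ k : ℕ, (u ^ s) ^ k = u := by
  have hb := Nat.gcd_eq_gcd_ab s t
  rw [hgcd] at hb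
  have h2 : u ^ ((t:ℤ) * Nat.gcdB s t) = 1 := by
    rw [zpow_mul, zpow_natCast, hu, one_zpow]
  have h1 : u ^ ((s:ℤ) * Nat.gcdA s t) = u := by
    have : u ^ ((s:ℤ) * Nat.gcdA s t + (t:ℤ) * Nat.gcdB s t) = u := by
      rw [← hb]; norm_num
    rw [zpow_add, h2, mul_one] at this
    exact this
  obtain ⟨m, hm⟩ := zpow_to_pow (u ^ s) (Nat.gcdA s t)
  refine ⟨m, ?_⟩
  rw [hm, ← zpow_natCast u s, ← zpow_mul]
  exact h1

lemma mem_pows_of_zpow {w x : G} (k : ℤ) (h : w ^ k = x) : ∃ m : ℕ, w ^ m = x := by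
  obtain ⟨m, hm⟩ := zpow_to_pow w k
  exact ⟨m, by rw [hm, h]⟩

lemma cyclic_compare
    (hcyc : ∀ x y : G, x * y = y * x → ∃ g : G, (∃ i : ℕ, g ^ i = x) ∧ (∃ j : ℕ, g ^ j = y))
    {q : ℕ} (hq : q.Prime) {x y : G} (hxy : x * y = y * x) {α β : ℕ}
    (hx : orderOf x = q ^ α) (hy : orderOf y = q ^ β) (hαβ : α ≤ β) :
    ∃ k : ℕ, y ^ k = x := by
  obtain ⟨g, ⟨i, hi⟩, ⟨j, hj⟩⟩ := hcyc x y hxy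
  have hqbpos : 0 < q ^ β := pow_pos hq.pos β
  have hqapos : 0 < q ^ α := pow_pos hq.pos α
  set n := orderOf g with hn
  have hnpos : 0 < n := orderOf_pos g
  -- orderOf y divides n
  have hydvd : q ^ β ∣ n := by
    rw [← hy]
    apply orderOf_dvd_of_pow_eq_one
    rw [← hj, ← pow_mul, mul_comm, pow_mul, pow_orderOf_eq_one, one_pow]
  obtain ⟨w, hw⟩ := hydvd
  -- j = w * s
  have hij : n ∣ j * q ^ β := by
    apply orderOf_dvd_of_pow_eq_one
    rw [pow_mul, hj, ← hy, pow_orderOf_eq_one]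
  have hwj : w ∣ j := by
    have : q ^ β * w ∣ q ^ β * j := by
      rw [← hw]; rwa [mul_comm j] at hij
    exact (mul_dvd_mul_iff_left hqbpos.ne').mp this
  obtain ⟨s, hs⟩ := hwj
  have hyw : y = (g ^ w) ^ s := by rw [← pow_mul, ← hs, hj]
  have hgw1 : (g ^ w) ^ q ^ β = 1 := by
    rw [← pow_mul, mul_comm, ← hw, pow_orderOf_eq_one]
  have hgword : orderOf (g ^ w) = q ^ β := by
    apply Nat.dvd_antisymm (orderOf_dvd_of_pow_eq_one hgw1)
    rw [← hy]
    apply orderOf_dvd_of_pow_eq_one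
    rw [hyw, ← pow_mul, mul_comm, pow_mul, pow_orderOf_eq_one, one_pow]
  -- gcd s (q^β) = 1
  have hgcd : Nat.gcd s (q ^ β) = 1 := by
    set d := Nat.gcd s (q ^ β) with hd
    have hds : d ∣ s := Nat.gcd_dvd_left _ _
    have hdq : d ∣ q ^ β := Nat.gcd_dvd_right _ _
    have hdpos : 0 < d := Nat.gcd_pos_of_pos_right _ hqbpos
    have hy1 : y ^ (q ^ β / d) = 1 := by
      obtain ⟨s', hs'⟩ := hds
      rw [hyw, ← pow_mul]
      have h5 : d * (q ^ β / d) = q ^ β := Nat.mul_div_cancel' hdq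
      have h6 : s * (q ^ β / d) = q ^ β * s' := by
        rw [hs']
        calc d * s' * (q ^ β / d) = s' * (d * (q ^ β / d)) := by ring
          _ = q ^ β * s' := by rw [h5]; ring
      rw [h6, pow_mul, hgw1, one_pow]
    have hdiv : q ^ β ∣ q ^ β / d := by
      have := orderOf_dvd_of_pow_eq_one hy1
      rwa [hy] at this
    have hle : q ^ β ≤ q ^ β / d :=
      Nat.le_of_dvd (Nat.div_pos (Nat.le_of_dvd hqbpos hdq) hdpos) hdiv
    have heq : q ^ β / d = q ^ β := le_antisymm (Nat.div_le_self _ _) hle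
    rcases (Nat.div_eq_self).1 heq with h | h
    · exact absurd h hqbpos.ne'
    · exact h
  obtain ⟨k, hk⟩ := modinv (g ^ w) hgcd hgw1
  rw [← hyw] at hk
  -- now x side
  have hxdvd : q ^ α ∣ n := by
    rw [← hx]
    apply orderOf_dvd_of_pow_eq_one
    rw [← hi, ← pow_mul, mul_comm, pow_mul, pow_orderOf_eq_one, one_pow]
  have hfact : q ^ α * (q ^ (β - α) * w) = n := by
    rw [hw, ← mul_assoc, ← pow_add]
    congr 2
    omega
  have hxi : n ∣ i * q ^ α := by
    apply orderOf_dvd_of_pow_eq_one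
    rw [pow_mul, hi, ← hx, pow_orderOf_eq_one]
  have hwi : q ^ (β - α) * w ∣ i := by
    have : q ^ α * (q ^ (β - α) * w) ∣ q ^ α * i := by
      rw [hfact]; rwa [mul_comm i] at hxi
    exact (mul_dvd_mul_iff_left hqapos.ne').mp this
  obtain ⟨t, ht⟩ := hwi
  have hxgt : x = (g ^ w) ^ (q ^ (β - α) * t) := by
    rw [← hi, ht, ← pow_mul]
    congr 1
    ring
  refine ⟨k * (q ^ (β - α) * t), ?_⟩
  rw [pow_mul, hk, ← hxgt]

lemma cyclic_compare'
    (hcyc : ∀ x y : G, x * y = y * x → ∃ g : G, (∃ i : ℕ, g ^ i = x) ∧ (∃ j : ℕ, g ^ j = y))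
    {q : ℕ} (hq : q.Prime) {x y : G} (hxy : x * y = y * x) {K : ℕ}
    (hx : x ^ q ^ K = 1) (hy : y ^ q ^ K = 1) :
    (∃ k : ℕ, y ^ k = x) ∨ ∃ k : ℕ, x ^ k = y := by
  obtain ⟨α, hα, hxo⟩ := (Nat.dvd_prime_pow hq).1 (orderOf_dvd_of_pow_eq_one hx)
  obtain ⟨β, hβ, hyo⟩ := (Nat.dvd_prime_pow hq).1 (orderOf_dvd_of_pow_eq_one hy)
  rcases le_total α β with h | h
  · exact Or.inl (cyclic_compare hcyc hq hxy hxo hyo h)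
  · exact Or.inr (cyclic_compare hcyc hq hxy.symm hyo hxo h)

lemma primary_part {q : ℕ} (hq : q.Prime) (x : G) :
    ∃ x1 x2 : G, x = x1 * x2 ∧ (∃ k : ℕ, x ^ k = x1) ∧ (∃ k : ℕ, x ^ k = x2) ∧
      (∃ e : ℕ, x1 ^ q ^ e = 1) ∧ (∃ m : ℕ, ¬ q ∣ m ∧ x2 ^ m = 1 ∧ m ≠ 0) := by
  set n := orderOf x with hn
  have hnne : n ≠ 0 := (orderOf_pos x).ne'
  set e := n.factorization q with he
  set m := n / q ^ e with hm
  have hqm : q ^ e * m = n := Nat.ordProj_mul_ordCompl_eq_self n q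
  have hndvd : ¬ q ∣ m := Nat.not_dvd_ordCompl hq hnne
  have hmne : m ≠ 0 := by
    intro h; rw [h, mul_zero] at hqm; exact hnne hqm.symm
  have hcop : Nat.Coprime (q ^ e) m :=
    Nat.Coprime.pow_left _ ((Nat.Prime.coprime_iff_not_dvd hq).2 hndvd)
  have hb := Nat.gcd_eq_gcd_ab (q ^ e) m
  rw [Nat.Coprime.gcd_eq_one hcop] at hb
  obtain ⟨k1, hk1⟩ := zpow_to_pow x ((m : ℤ) * Nat.gcdB (q ^ e) m)
  obtain ⟨k2, hk2⟩ := zpow_to_pow x ((q ^ e : ℤ) * Nat.gcdA (q ^ e) m)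
  have hxn : x ^ (n : ℤ) = 1 := by rw [zpow_natCast, hn, pow_orderOf_eq_one]
  refine ⟨x ^ k1, x ^ k2, ?_, ⟨k1, rfl⟩, ⟨k2, rfl⟩, ⟨e, ?_⟩, ⟨m, hndvd, ?_, hmne⟩⟩
  · rw [hk1, hk2, ← zpow_add]
    have : (m : ℤ) * Nat.gcdB (q ^ e) m + (q ^ e : ℤ) * Nat.gcdA (q ^ e) m = 1 := by
      push_cast at hb ⊢
      linarith [hb]
    rw [this, zpow_one]
  · rw [hk1, ← zpow_natCast (x ^ ((m : ℤ) * Nat.gcdB (q ^ e) m)), ← zpow_mul]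
    have : (m : ℤ) * Nat.gcdB (q ^ e) m * (q ^ e : ℕ) = (n : ℤ) * Nat.gcdB (q ^ e) m := by
      push_cast
      rw [← hqm]
      push_cast
      ring
    rw [this, zpow_mul, hxn, one_zpow]
  · rw [hk2, ← zpow_natCast (x ^ ((q ^ e : ℤ) * Nat.gcdA (q ^ e) m)), ← zpow_mul]
    have : (q ^ e : ℤ) * Nat.gcdA (q ^ e) m * (m : ℕ) = (n : ℤ) * Nat.gcdA (q ^ e) m := by
      push_cast
      rw [← hqm]
      push_cast
      ring
    rw [this, zpow_mul, hxn, one_zpow]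

end FiniteStuff

section Core
variable [Finite G]
variable (hc : ∀ a b g : G, Commute ⁅a, b⁆ g)
variable (hcyc : ∀ x y : G, x * y = y * x → ∃ g : G, (∃ i : ℕ, g ^ i = x) ∧ (∃ j : ℕ, g ^ j = y))

include hc in
lemma K_vanish_coprime {q : ℕ} (hq : q.Prime) {u v : G} {a m : ℕ}
    (hu : u ^ q ^ a = 1) (hv : v ^ m = 1) (hm : ¬ q ∣ m) : ⁅u, v⁆ = 1 := by
  have h1 : ⁅u, v⁆ ^ q ^ a = 1 := by rw [← K_pow_left hc, hu, commutatorElement_one_left]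
  have h2 : ⁅u, v⁆ ^ m = 1 := by rw [← K_pow_right hc, hv, commutatorElement_one_right]
  have hcop : Nat.Coprime (q ^ a) m := Nat.Coprime.pow_left _ ((hq.coprime_iff_not_dvd).2 hm)
  have hdvd := Nat.dvd_gcd (orderOf_dvd_of_pow_eq_one h1) (orderOf_dvd_of_pow_eq_one h2)
  rw [Nat.Coprime.gcd_eq_one hcop] at hdvd
  exact orderOf_eq_one_iff.1 (Nat.dvd_one.mp hdvd)

include hc in
lemma qpart {q : ℕ} (hq : q.Prime) (x y : G) (h : orderOf ⁅x, y⁆ = q) :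
    ∃ x' y' : G, (∃ e, x' ^ q ^ e = 1) ∧ (∃ e, y' ^ q ^ e = 1) ∧ ⁅x', y'⁆ = ⁅x, y⁆ := by
  obtain ⟨x1, x2, hx12, _, _, ⟨e1, hxe⟩, ⟨m1, hm1, hxm, hm1ne⟩⟩ := primary_part hq x
  obtain ⟨y1, y2, hy12, _, _, ⟨e2, hye⟩, ⟨m2, hm2, hym, hm2ne⟩⟩ := primary_part hq y
  refine ⟨x1, y1, ⟨e1, hxe⟩, ⟨e2, hye⟩, ?_⟩
  have hKe : ⁅x, y⁆ = ⁅x1, y1⁆ * ⁅x1, y2⁆ * (⁅x2, y1⁆ * ⁅x2, y2⁆) := by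
    conv_lhs => rw [hx12, hy12]
    rw [K_mul_left hc, K_mul_right hc, K_mul_right hc]
  have h12 : ⁅x1, y2⁆ = 1 := K_vanish_coprime hc hq hxe hym hm2
  have h21 : ⁅x2, y1⁆ = 1 := by
    have := K_vanish_coprime hc hq hye hxm hm1
    rw [← commutatorElement_inv, this, inv_one]
  rw [h12, h21, mul_one, one_mul] at hKe
  have ho1 : orderOf ⁅x1, y1⁆ ∣ q ^ e1 :=
    orderOf_dvd_of_pow_eq_one (by rw [← K_pow_left hc, hxe, commutatorElement_one_left])
  have ho2 : orderOf ⁅x2, y2⁆ ∣ m1 :=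
    orderOf_dvd_of_pow_eq_one (by rw [← K_pow_left hc, hxm, commutatorElement_one_left])
  have hcop1 : Nat.Coprime (q ^ e1) m1 :=
    Nat.Coprime.pow_left _ ((hq.coprime_iff_not_dvd).2 hm1)
  have hcop : Nat.Coprime (orderOf ⁅x1, y1⁆) (orderOf ⁅x2, y2⁆) :=
    Nat.Coprime.coprime_dvd_left ho1 (Nat.Coprime.coprime_dvd_right ho2 hcop1)
  have horder := (hc x1 y1 ⁅x2, y2⁆).orderOf_mul_eq_mul_orderOf_of_coprime hcop
  rw [hKe, horder] at h
  have ho2q : orderOf ⁅x2, y2⁆ ∣ q := by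
    rw [← h]; exact dvd_mul_left _ _
  have hcopq : Nat.Coprime q m1 := (hq.coprime_iff_not_dvd).2 hm1
  have h1 : orderOf ⁅x2, y2⁆ ∣ 1 := by
    have := Nat.dvd_gcd ho2q ho2
    rwa [Nat.Coprime.gcd_eq_one hcopq] at this
  have hB : ⁅x2, y2⁆ = 1 := orderOf_eq_one_iff.1 (Nat.dvd_one.mp h1)
  rw [hB, mul_one] at hKe
  exact hKe.symm

include hcyc in
lemma small_central {q : ℕ} (hq : q.Prime) {w c : G} (hcen : ∀ g : G, Commute c g)
    (hco : orderOf c = q) (hw : w ^ q = 1) : ∃ k : ℕ, c ^ k = w := by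
  have hcq1 : c ^ q ^ 1 = 1 := by rw [pow_one, ← hco]; exact pow_orderOf_eq_one c
  have hwq : w ^ q ^ 1 = 1 := by rwa [pow_one]
  rcases cyclic_compare' hcyc hq ((hcen w).symm.eq) hwq hcq1 with h | ⟨k, hk⟩
  · exact h
  · have hcne : c ≠ 1 := by
      intro h; rw [h, orderOf_one] at hco; exact hq.one_lt.ne' hco.symm
    have hgcd : Nat.gcd k q = 1 := by
      rcases (Nat.coprime_or_dvd_of_prime hq k) with h | h
      · exact Nat.coprime_comm.mp h
      · exfalso
        obtain ⟨k', rfl⟩ := h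
        rw [pow_mul, hw, one_pow] at hk
        exact hcne hk.symm
    obtain ⟨k', hk'⟩ := modinv w hgcd hw
    exact ⟨k', by rw [← hk, hk']⟩

include hc hcyc in
lemma core_odd {q : ℕ} (hq : q.Prime) (hodd : Odd q)
    {x y : G} (hx : ∃ e, x ^ q ^ e = 1) (hy : ∃ e, y ^ q ^ e = 1)
    (hK : orderOf ⁅x, y⁆ = q) : False := by
  obtain ⟨e1, hxe⟩ := hx
  obtain ⟨e2, hye⟩ := hy
  have hcen : ∀ g : G, Commute ⁅x, y⁆ g := hc x y
  have hcq : ⁅x, y⁆ ^ q = 1 := by rw [← hK]; exact pow_orderOf_eq_one _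
  have hcne : ⁅x, y⁆ ≠ 1 := by
    intro h; rw [h, orderOf_one] at hK; exact hq.one_lt.ne' hK.symm
  have hxE : x ^ q ^ max e1 e2 = 1 := by
    have : orderOf x ∣ q ^ max e1 e2 :=
      dvd_trans (orderOf_dvd_of_pow_eq_one hxe) (pow_dvd_pow q (le_max_left _ _))
    exact orderOf_dvd_iff_pow_eq_one.1 this
  have hyE : y ^ q ^ max e1 e2 = 1 := by
    have : orderOf y ∣ q ^ max e1 e2 :=
      dvd_trans (orderOf_dvd_of_pow_eq_one hye) (pow_dvd_pow q (le_max_right _ _))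
    exact orderOf_dvd_iff_pow_eq_one.1 this
  have hxqE : (x ^ q) ^ q ^ max e1 e2 = 1 := by
    rw [← pow_mul, mul_comm, pow_mul, hxE, one_pow]
  have hcomm : x ^ q * y = y * x ^ q := by
    have h1 : ⁅x ^ q, y⁆ = 1 := by rw [K_pow_left hc, hcq]
    exact (commutatorElement_eq_one_iff_commute.1 h1).eq
  rcases cyclic_compare' hcyc hq hcomm hxqE hyE with ⟨s, hs⟩ | ⟨k, hk⟩
  · by_cases hqs : q ∣ s
    · obtain ⟨s', rfl⟩ := hqs
      have hKd : ⁅x * (y ^ s')⁻¹, y⁆ = ⁅x, y⁆ := by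
        rw [K_mul_left hc, K_inv_left hc, K_pow_self hc, inv_one, mul_one]
      have hdx : ⁅(y ^ s')⁻¹, x⁆ = ⁅x, y⁆ ^ s' := by
        rw [K_inv_left hc, K_pow_left hc, ← commutatorElement_inv, inv_pow, inv_inv]
      have hchoose : ⁅x, y⁆ ^ (s' * q.choose 2) = 1 := by
        obtain ⟨hh, hhh⟩ := hodd
        have hch : q.choose 2 = q * hh := by
          rw [Nat.choose_two_right, hhh, Nat.add_sub_cancel,
            show (2 * hh + 1) * (2 * hh) = 2 * ((2 * hh + 1) * hh) from by ring,
            Nat.mul_div_cancel_left _ (by norm_num)]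
        rw [hch, show s' * (q * hh) = q * (s' * hh) from by ring, pow_mul, hcq, one_pow]
      have hAq : (x * (y ^ s')⁻¹) ^ q = 1 := by
        rw [pow_formula hc, hdx, ← pow_mul, hchoose, one_mul, inv_pow, ← pow_mul,
          show s' * q = q * s' from mul_comm _ _, hs, mul_inv_cancel]
      have hAcen := small_central hcyc hq hcen hK hAq
      have hfin := K_eq_one_of_left_pow hc y hcen hAcen
      rw [hKd] at hfin
      exact hcne hfin
    · obtain ⟨β, _, hβ⟩ := (Nat.dvd_prime_pow hq).1 (orderOf_dvd_of_pow_eq_one hyE)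
      have hgcd : Nat.gcd s (q ^ β) = 1 :=
        Nat.Coprime.pow_right _ (Nat.coprime_comm.mp ((hq.coprime_iff_not_dvd).2 hqs))
      have hyq : y ^ q ^ β = 1 := by rw [← hβ]; exact pow_orderOf_eq_one y
      obtain ⟨k, hk⟩ := modinv y hgcd hyq
      apply hcne
      apply K_eq_one_of_pow_right hc
      exact ⟨q * k, by rw [pow_mul, ← hs, hk]⟩
  · apply hcne
    apply K_eq_one_of_pow_right hc
    exact ⟨q * k, by rw [pow_mul, hk]⟩

include hc hcyc in
lemma core_two {x y : G} (hx : ∃ e, x ^ 2 ^ e = 1) (hy : ∃ e, y ^ 2 ^ e = 1)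
    (hK : orderOf ⁅x, y⁆ = 2) :
    ∃ a b : G, a ^ 2 = ⁅x, y⁆ ∧ b ^ 2 = ⁅x, y⁆ ∧ ⁅a, b⁆ = ⁅x, y⁆ := by
  obtain ⟨e1, hxe⟩ := hx
  obtain ⟨e2, hye⟩ := hy
  have hcen : ∀ g : G, Commute ⁅x, y⁆ g := hc x y
  have hz2 : ⁅x, y⁆ ^ 2 = 1 := by rw [← hK]; exact pow_orderOf_eq_one _
  have hzne : ⁅x, y⁆ ≠ 1 := by
    intro h; rw [h, orderOf_one] at hK; norm_num at hK
  have hxE : x ^ 2 ^ max e1 e2 = 1 := by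
    have : orderOf x ∣ 2 ^ max e1 e2 :=
      dvd_trans (orderOf_dvd_of_pow_eq_one hxe) (pow_dvd_pow 2 (le_max_left _ _))
    exact orderOf_dvd_iff_pow_eq_one.1 this
  have hyE : y ^ 2 ^ max e1 e2 = 1 := by
    have : orderOf y ∣ 2 ^ max e1 e2 :=
      dvd_trans (orderOf_dvd_of_pow_eq_one hye) (pow_dvd_pow 2 (le_max_right _ _))
    exact orderOf_dvd_iff_pow_eq_one.1 this
  have hxqE : (x ^ 2) ^ 2 ^ max e1 e2 = 1 := by
    rw [← pow_mul, mul_comm, pow_mul, hxE, one_pow]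
  have hcomm : x ^ 2 * y = y * x ^ 2 := by
    have h1 : ⁅x ^ 2, y⁆ = 1 := by rw [K_pow_left hc, hz2]
    exact (commutatorElement_eq_one_iff_commute.1 h1).eq
  rcases cyclic_compare' hcyc Nat.prime_two hcomm hxqE hyE with ⟨s, hs⟩ | ⟨k, hk⟩
  · by_cases hqs : 2 ∣ s
    · obtain ⟨s', rfl⟩ := hqs
      set A := x * (y ^ s')⁻¹ with hA
      have hKA : ⁅A, y⁆ = ⁅x, y⁆ := by
        rw [hA, K_mul_left hc, K_inv_left hc, K_pow_self hc, inv_one, mul_one]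
      have hdx : ⁅(y ^ s')⁻¹, x⁆ = ⁅x, y⁆ ^ s' := by
        rw [K_inv_left hc, K_pow_left hc, ← commutatorElement_inv, inv_pow, inv_inv]
      have hA2 : A ^ 2 = ⁅x, y⁆ ^ s' := by
        rw [hA, pow_formula hc, hdx, Nat.choose_self, pow_one, inv_pow, ← pow_mul,
          show s' * 2 = 2 * s' from mul_comm _ _, hs, mul_assoc, mul_inv_cancel, mul_one]
      by_cases hpar : 2 ∣ s'
      · exfalso
        obtain ⟨t, rfl⟩ := hpar
        have hA21 : A ^ 2 = 1 := by
          rw [hA2, pow_mul, hz2, one_pow]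
        have hAcen := small_central hcyc Nat.prime_two hcen hK hA21
        have hfin := K_eq_one_of_left_pow hc y hcen hAcen
        rw [hKA] at hfin
        exact hzne hfin
      · have hA2z : A ^ 2 = ⁅x, y⁆ := by
          rw [hA2, pow_eq_pow_mod s' hz2, Nat.two_dvd_ne_zero.mp hpar, pow_one]
        -- now find b with b^2 = z
        have hA4 : A ^ 4 = 1 := by
          rw [show (4:ℕ) = 2 * 2 from rfl, pow_mul, hA2z, hz2]
        have hA4' : A ^ 2 ^ max (max e1 e2) 2 = 1 := by
          have : orderOf A ∣ 2 ^ max (max e1 e2) 2 := by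
            apply dvd_trans (orderOf_dvd_of_pow_eq_one hA4)
            rw [show (4:ℕ) = 2 ^ 2 from rfl]
            exact pow_dvd_pow 2 (le_max_right _ _)
          exact orderOf_dvd_iff_pow_eq_one.1 this
        have hy2E : (y ^ 2) ^ 2 ^ max (max e1 e2) 2 = 1 := by
          have : orderOf (y ^ 2) ∣ 2 ^ max (max e1 e2) 2 := by
            apply dvd_trans (orderOf_dvd_of_pow_eq_one (show (y^2) ^ 2 ^ max e1 e2 = 1 from by
              rw [← pow_mul, mul_comm, pow_mul, hyE, one_pow]))
            exact pow_dvd_pow 2 (le_max_left _ _)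
          exact orderOf_dvd_iff_pow_eq_one.1 this
        have hcomm2 : y ^ 2 * A = A * y ^ 2 := by
          have h1 : ⁅y ^ 2, A⁆ = 1 := by
            rw [K_pow_left hc, ← commutatorElement_inv, hKA, inv_pow, hz2, inv_one]
          exact (commutatorElement_eq_one_iff_commute.1 h1).eq
        rcases cyclic_compare' hcyc Nat.prime_two hcomm2 hy2E hA4' with ⟨k, hk⟩ | ⟨k, hk⟩
        · by_cases h2k : 2 ∣ k
          · obtain ⟨t, rfl⟩ := h2k
            have hy2t : y ^ 2 = ⁅x, y⁆ ^ t := by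
              rw [← hk, pow_mul, hA2z]
            by_cases h2t : 2 ∣ t
            · exfalso
              obtain ⟨u, rfl⟩ := h2t
              have hy21 : y ^ 2 = 1 := by rw [hy2t, pow_mul, hz2, one_pow]
              have hycen := small_central hcyc Nat.prime_two hcen hK hy21
              have hfin := K_eq_one_of_left_pow hc x hcen hycen
              apply hzne
              rw [← commutatorElement_inv, hfin, inv_one]
            · have hy2z : y ^ 2 = ⁅x, y⁆ := by
                rw [hy2t, pow_eq_pow_mod t hz2, Nat.two_dvd_ne_zero.mp h2t, pow_one]
              exact ⟨A, y, hA2z, hy2z, hKA⟩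
          · exfalso
            have hgcd : Nat.gcd k 4 = 1 := by
              have h1 : Nat.Coprime k 2 :=
                Nat.coprime_comm.mp ((Nat.prime_two.coprime_iff_not_dvd).2 h2k)
              have h2 := Nat.Coprime.pow_right 2 h1
              rwa [show (2:ℕ)^2 = 4 from rfl] at h2
            obtain ⟨k', hk'⟩ := modinv A hgcd hA4
            apply hzne
            rw [← hKA]
            apply K_eq_one_of_pow_left hc
            exact ⟨2 * k', by rw [pow_mul, ← hk, hk']⟩
        · exfalso
          apply hzne
          rw [← hKA]
          apply K_eq_one_of_pow_left hc
          exact ⟨2 * k, by rw [pow_mul, hk]⟩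
    · obtain ⟨β, _, hβ⟩ := (Nat.dvd_prime_pow Nat.prime_two).1 (orderOf_dvd_of_pow_eq_one hyE)
      have hgcd : Nat.gcd s (2 ^ β) = 1 :=
        Nat.Coprime.pow_right _ (Nat.coprime_comm.mp ((Nat.prime_two.coprime_iff_not_dvd).2 hqs))
      have hyq : y ^ 2 ^ β = 1 := by rw [← hβ]; exact pow_orderOf_eq_one y
      obtain ⟨k, hk⟩ := modinv y hgcd hyq
      exfalso
      apply hzne
      apply K_eq_one_of_pow_right hc
      exact ⟨2 * k, by rw [pow_mul, ← hs, hk]⟩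
  · exfalso
    apply hzne
    apply K_eq_one_of_pow_right hc
    exact ⟨2 * k, by rw [pow_mul, hk]⟩

end Core

section DivRing

theorem cyclic_of_comm_embed {D : Type u} [DivisionRing D] {H : Type*} [Group H] [Finite H]
    (φ : H →* Dˣ) (hφ : Function.Injective φ) (hcomm : ∀ x y : H, x * y = y * x) :
    IsCyclic H := by
  classical
  set s : Set D := Set.range (fun h : H => ((φ h : Dˣ) : D)) with hs
  have hscomm : ∀ a ∈ s, ∀ b ∈ s, a * b = b * a := by
    rintro a ⟨g1, rfl⟩ b ⟨g2, rfl⟩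
    have h1 : φ g1 * φ g2 = φ g2 * φ g1 := by rw [← map_mul, ← map_mul, hcomm]
    simpa using congrArg Units.val h1
  have hsub : s ⊆ Set.centralizer s := by
    intro a ha
    rw [Set.mem_centralizer_iff]
    intro m hm
    exact hscomm m hm a ha
  set Z2 : Subring D := Subring.centralizer (Set.centralizer s) with hZ2
  have hzmem : ∀ h : H, ((φ h : Dˣ) : D) ∈ Z2 := by
    intro h
    rw [hZ2, Subring.mem_centralizer_iff]
    intro m hm
    exact ((Set.mem_centralizer_iff.mp hm) _ ⟨h, rfl⟩).symm
  have hanti : (Z2 : Set D) ⊆ Set.centralizer s := by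
    rw [hZ2, Subring.coe_centralizer]
    exact Set.centralizer_subset hsub
  have hZcomm : ∀ a b : ↥Z2, a * b = b * a := by
    rintro ⟨a, ha⟩ ⟨b, hb⟩
    apply Subtype.ext
    show a * b = b * a
    have hb' : b ∈ Set.centralizer s := hanti hb
    exact ((Subring.mem_centralizer_iff.mp ha) b hb').symm
  letI : CommRing ↥Z2 := { (inferInstance : Ring ↥Z2) with mul_comm := hZcomm }
  haveI : IsDomain ↥Z2 := by
    constructor
  let f : H →* ↥Z2 :=
    { toFun := fun h => ⟨((φ h : Dˣ) : D), hzmem h⟩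
      map_one' := by apply Subtype.ext; simp
      map_mul' := by intro a b; apply Subtype.ext; simp }
  have hfinj : Function.Injective f := by
    intro a b hab
    apply hφ
    apply Units.ext
    exact congrArg Subtype.val hab
  exact isCyclic_of_subgroup_isDomain f hfinj

theorem subgroup_comm_cyclic {D : Type u} [DivisionRing D] (N : Subgroup Dˣ) [Finite ↥N]
    (H : Subgroup ↥N) (hcomm : ∀ u ∈ H, ∀ v ∈ H, u * v = v * u) : IsCyclic ↥H :=
  cyclic_of_comm_embed (N.subtype.comp H.subtype)
    ((Subgroup.subtype_injective N).comp (Subgroup.subtype_injective H))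
    (fun u v => Subtype.ext (hcomm u u.2 v v.2))

theorem hcyc_of_divring {D : Type u} [DivisionRing D] (N : Subgroup Dˣ) [Finite ↥N] :
    ∀ x y : ↥N, x * y = y * x → ∃ g : ↥N, (∃ i : ℕ, g ^ i = x) ∧ (∃ j : ℕ, g ^ j = y) := by
  intro x y hxy
  set A := Subgroup.closure ({x, y} : Set ↥N) with hA
  have hxA : x ∈ A := Subgroup.subset_closure (by simp)
  have hyA : y ∈ A := Subgroup.subset_closure (by simp)
  have step1 : ∀ u ∈ ({x, y} : Set ↥N), ∀ v ∈ A, u * v = v * u := by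
    intro u hu v hv
    have hle : A ≤ Subgroup.centralizer {u} := by
      rw [hA]
      apply (Subgroup.closure_le _).2
      intro w hw
      rw [SetLike.mem_coe, Subgroup.mem_centralizer_iff]
      intro g hg
      rw [Set.mem_singleton_iff] at hg
      subst hg
      rcases hu with rfl | hu <;> rcases hw with rfl | hw
      · rfl
      · rw [Set.mem_singleton_iff] at hw; subst hw; exact hxy
      · rw [Set.mem_singleton_iff] at hu; subst hu; exact hxy.symm
      · rw [Set.mem_singleton_iff] at hu hw; subst hu; subst hw; rfl
    have hv' := hle hv
    rw [Subgroup.mem_centralizer_iff] at hv'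
    exact hv' u (Set.mem_singleton u)
  have hAll : ∀ u ∈ A, ∀ v ∈ A, u * v = v * u := by
    intro u hu v hv
    have hle2 : A ≤ Subgroup.centralizer {v} := by
      rw [hA]
      apply (Subgroup.closure_le _).2
      intro w hw
      rw [SetLike.mem_coe, Subgroup.mem_centralizer_iff]
      intro g hg
      rw [Set.mem_singleton_iff] at hg
      subst hg
      exact (step1 w hw g hv).symm
    have hu' := hle2 hu
    rw [Subgroup.mem_centralizer_iff] at hu'
    exact (hu' v (Set.mem_singleton v)).symm
  haveI : IsCyclic ↥A := subgroup_comm_cyclic N A hAll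
  obtain ⟨g₀, hg₀⟩ := IsCyclic.exists_generator (α := ↥A)
  obtain ⟨kx, hkx⟩ := Subgroup.mem_zpowers_iff.mp (hg₀ ⟨x, hxA⟩)
  obtain ⟨ky, hky⟩ := Subgroup.mem_zpowers_iff.mp (hg₀ ⟨y, hyA⟩)
  have hkx' : ((g₀ : ↥N)) ^ kx = x := by
    have h := congrArg Subtype.val hkx
    rwa [SubgroupClass.coe_zpow] at h
  have hky' : ((g₀ : ↥N)) ^ ky = y := by
    have h := congrArg Subtype.val hky
    rwa [SubgroupClass.coe_zpow] at h
  exact ⟨(g₀ : ↥N), mem_pows_of_zpow kx hkx', mem_pows_of_zpow ky hky'⟩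

end DivRing

section Torsion
variable [Finite G]
variable (hc : ∀ a b g : G, Commute ⁅a, b⁆ g)
variable (hcyc : ∀ x y : G, x * y = y * x → ∃ g : G, (∃ i : ℕ, g ^ i = x) ∧ (∃ j : ℕ, g ^ j = y))

include hc in
lemma tw_mul {g h : G} (hg : ∃ e, g ^ 2 ^ e = 1) (hh : ∃ e, h ^ 2 ^ e = 1) :
    ∃ e, (g * h) ^ 2 ^ e = 1 := by
  obtain ⟨e1, hg1⟩ := hg
  obtain ⟨e2, hh2⟩ := hh
  refine ⟨e1 + e2 + 1, ?_⟩
  rw [pow_formula hc]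
  have h1 : g ^ 2 ^ (e1 + e2 + 1) = 1 :=
    orderOf_dvd_iff_pow_eq_one.1
      (dvd_trans (orderOf_dvd_of_pow_eq_one hg1) (pow_dvd_pow 2 (by omega)))
  have h2 : h ^ 2 ^ (e1 + e2 + 1) = 1 :=
    orderOf_dvd_iff_pow_eq_one.1
      (dvd_trans (orderOf_dvd_of_pow_eq_one hh2) (pow_dvd_pow 2 (by omega)))
  have h3 : ⁅h, g⁆ ^ (2 ^ (e1 + e2 + 1)).choose 2 = 1 := by
    have hKv : ⁅h, g⁆ ^ 2 ^ e1 = 1 := by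
      rw [← K_pow_right hc, hg1, commutatorElement_one_right]
    have hdvd : 2 ^ e1 ∣ (2 ^ (e1 + e2 + 1)).choose 2 := by
      rw [Nat.choose_two_right,
        show (2:ℕ) ^ (e1+e2+1) * (2 ^ (e1+e2+1) - 1) = 2 * (2 ^ (e1+e2) * (2 ^ (e1+e2+1) - 1))
          from by rw [pow_succ]; ring,
        Nat.mul_div_cancel_left _ (by norm_num)]
      exact Dvd.dvd.mul_right (pow_dvd_pow 2 (by omega)) _
    obtain ⟨c', hc'⟩ := hdvd
    rw [hc', pow_mul, hKv, one_pow]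
  rw [h1, h2, h3, one_mul, one_mul]

include hc in
lemma od_mul {g h : G} (hg : ∃ m, Odd m ∧ g ^ m = 1) (hh : ∃ m, Odd m ∧ h ^ m = 1) :
    ∃ m, Odd m ∧ (g * h) ^ m = 1 := by
  obtain ⟨m1, hm1o, hg1⟩ := hg
  obtain ⟨m2, hm2o, hh2⟩ := hh
  refine ⟨m1 * m2, hm1o.mul hm2o, ?_⟩
  rw [pow_formula hc]
  have h1 : g ^ (m1 * m2) = 1 := by rw [pow_mul, hg1, one_pow]
  have h2 : h ^ (m1 * m2) = 1 := by rw [mul_comm, pow_mul, hh2, one_pow]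
  have h3 : ⁅h, g⁆ ^ (m1 * m2).choose 2 = 1 := by
    have hKv : ⁅h, g⁆ ^ m1 = 1 := by rw [← K_pow_right hc, hg1, commutatorElement_one_right]
    have hdvd : m1 ∣ (m1 * m2).choose 2 := by
      obtain ⟨t, ht⟩ := hm1o.mul hm2o
      rw [Nat.choose_two_right, ht, Nat.add_sub_cancel,
        show (2*t+1) * (2*t) = 2 * ((2*t+1) * t) from by ring,
        Nat.mul_div_cancel_left _ (by norm_num), ← ht]
      exact Dvd.dvd.mul_right (dvd_mul_right m1 m2) t
    obtain ⟨c', hc'⟩ := hdvd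
    rw [hc', pow_mul, hKv, one_pow]
  rw [h1, h2, h3, one_mul, one_mul]

omit [Finite G] in
lemma tw_inv {g : G} (hg : ∃ e, g ^ 2 ^ e = 1) : ∃ e, g⁻¹ ^ 2 ^ e = 1 := by
  obtain ⟨e, he⟩ := hg
  exact ⟨e, by rw [inv_pow, he, inv_one]⟩

omit [Finite G] in
lemma od_inv {g : G} (hg : ∃ m, Odd m ∧ g ^ m = 1) : ∃ m, Odd m ∧ g⁻¹ ^ m = 1 := by
  obtain ⟨m, hmo, he⟩ := hg
  exact ⟨m, hmo, by rw [inv_pow, he, inv_one]⟩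

omit [Finite G] in
lemma tw_pow {g : G} (k : ℕ) (hg : ∃ e, g ^ 2 ^ e = 1) : ∃ e, (g ^ k) ^ 2 ^ e = 1 := by
  obtain ⟨e, he⟩ := hg
  exact ⟨e, by rw [← pow_mul, mul_comm, pow_mul, he, one_pow]⟩

omit [Finite G] in
lemma od_pow {g : G} (k : ℕ) (hg : ∃ m, Odd m ∧ g ^ m = 1) :
    ∃ m, Odd m ∧ (g ^ k) ^ m = 1 := by
  obtain ⟨m, hmo, he⟩ := hg
  exact ⟨m, hmo, by rw [← pow_mul, mul_comm, pow_mul, he, one_pow]⟩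

lemma tw_od_eq_one {g : G} (h2 : ∃ e, g ^ 2 ^ e = 1) (ho : ∃ m, Odd m ∧ g ^ m = 1) :
    g = 1 := by
  obtain ⟨e, he⟩ := h2
  obtain ⟨m, hmo, hm⟩ := ho
  have hcop : Nat.Coprime (2 ^ e) m :=
    Nat.Coprime.pow_left _
      ((Nat.prime_two.coprime_iff_not_dvd).2 (Nat.two_dvd_ne_zero.mpr (Nat.odd_iff.mp hmo)))
  have hdvd := Nat.dvd_gcd (orderOf_dvd_of_pow_eq_one he) (orderOf_dvd_of_pow_eq_one hm)
  rw [Nat.Coprime.gcd_eq_one hcop] at hdvd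
  exact orderOf_eq_one_iff.1 (Nat.dvd_one.mp hdvd)

include hc in
lemma tw_od_commute {g h : G} (hg : ∃ e, g ^ 2 ^ e = 1) (hh : ∃ m, Odd m ∧ h ^ m = 1) :
    g * h = h * g := by
  obtain ⟨e, he⟩ := hg
  obtain ⟨m, hmo, hm⟩ := hh
  have h1 := K_vanish_coprime hc Nat.prime_two he hm (Nat.two_dvd_ne_zero.mpr (Nat.odd_iff.mp hmo))
  exact (commutatorElement_eq_one_iff_commute.1 h1).eq

include hc hcyc in
lemma comm_tw (u v : G) : ∃ e, ⁅u, v⁆ ^ 2 ^ e = 1 := by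
  have hnpos : 0 < orderOf ⁅u, v⁆ := orderOf_pos _
  have hp2 : ∀ p : ℕ, p.Prime → p ∣ orderOf ⁅u, v⁆ → p = 2 := by
    intro p hp hpn
    by_contra hpne
    have hodd : Odd p := hp.odd_of_ne_two hpne
    haveI : Fact p.Prime := ⟨hp⟩
    have hKo : orderOf ⁅u, v ^ (orderOf ⁅u, v⁆ / p)⁆ = p := by
      rw [K_pow_right hc]
      apply orderOf_eq_prime
      · rw [← pow_mul, Nat.div_mul_cancel hpn, pow_orderOf_eq_one]
      · apply pow_ne_one_of_lt_orderOf
        · exact (Nat.div_pos (Nat.le_of_dvd hnpos hpn) hp.pos).ne'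
        · exact Nat.div_lt_self hnpos hp.one_lt
    obtain ⟨x', y', hx', hy', hKe⟩ := qpart hc hp u (v ^ (orderOf ⁅u, v⁆ / p)) hKo
    exact core_odd hc hcyc hp hodd hx' hy' (by rw [hKe, hKo])
  have := Nat.eq_prime_pow_of_unique_prime_dvd hnpos.ne'
      (fun {d} hd hdn => hp2 d hd hdn)
  exact ⟨(orderOf ⁅u, v⁆).primeFactorsList.length, by rw [← this, pow_orderOf_eq_one]⟩

end Torsion

end Stmt4

open Stmt4 commutatorElement in
/-- Let `D` be a division ring and `N` a finite subgroup of `D^*`.  If `N` is nilpotent of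
class at most 2 (its commutator subgroup lies in its center), then `N` is either cyclic or
isomorphic to `Q₈ × C` with `C` cyclic, where `Q₈ = QuaternionGroup 2` is the quaternion
group of order 8. -/
theorem stmt_4 {D : Type u} [DivisionRing D]
    (N : Subgroup Dˣ) (hfin : Finite ↥N)
    (hclass2 : ∀ a b : ↥N, a * b * a⁻¹ * b⁻¹ ∈ Subgroup.center ↥N) :
    IsCyclic ↥N ∨
      ∃ (C : Type) (_ : Group C) (_ : IsCyclic C),
        Nonempty (↥N ≃* QuaternionGroup 2 × C) := by
  classical
  have hc : ∀ a b g : ↥N, Commute ⁅a, b⁆ g := fun a b g =>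
    (Subgroup.mem_center_iff.mp (hclass2 a b) g).symm
  have hcyc := hcyc_of_divring N
  by_cases habel : ∀ x y : ↥N, x * y = y * x
  · exact Or.inl (cyclic_of_comm_embed N.subtype (Subgroup.subtype_injective N) habel)
  right
  push_neg at habel
  obtain ⟨x0, y0, hxy0⟩ := habel
  have hc0ne : ⁅x0, y0⁆ ≠ 1 := fun h => hxy0 (commutatorElement_eq_one_iff_commute.1 h).eq
  have hn0pos : 0 < orderOf ⁅x0, y0⁆ := orderOf_pos _
  have hn0ne1 : orderOf ⁅x0, y0⁆ ≠ 1 := fun h => hc0ne (orderOf_eq_one_iff.mp h)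
  obtain ⟨q, hq, hqdvd⟩ := Nat.exists_prime_and_dvd hn0ne1
  haveI : Fact q.Prime := ⟨hq⟩
  have hKo : orderOf ⁅x0, y0 ^ (orderOf ⁅x0, y0⁆ / q)⁆ = q := by
    rw [K_pow_right hc]
    apply orderOf_eq_prime
    · rw [← pow_mul, Nat.div_mul_cancel hqdvd, pow_orderOf_eq_one]
    · apply pow_ne_one_of_lt_orderOf
      · exact (Nat.div_pos (Nat.le_of_dvd hn0pos hqdvd) hq.pos).ne'
      · exact Nat.div_lt_self hn0pos hq.one_lt
  obtain ⟨x1, y1, hx1, hy1, hKe1⟩ := qpart hc hq x0 _ hKo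
  have hq2 : q = 2 := by
    by_contra hne
    exact core_odd hc hcyc hq (hq.odd_of_ne_two hne) hx1 hy1 (by rw [hKe1, hKo])
  subst hq2
  obtain ⟨a, b, ha2, hb2, hKab⟩ := core_two hc hcyc hx1 hy1 (by rw [hKe1, hKo])
  have hzcen0 : ∀ g : ↥N, Commute ⁅x1, y1⁆ g := hc x1 y1
  have hzord0 : orderOf ⁅x1, y1⁆ = 2 := by rw [hKe1]; exact hKo
  obtain ⟨z, hzcen, hzord, ha2, hb2, hKab⟩ :
      ∃ z : ↥N, (∀ g : ↥N, Commute z g) ∧ orderOf z = 2 ∧ a ^ 2 = z ∧ b ^ 2 = z ∧ ⁅a, b⁆ = z :=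
    ⟨⁅x1, y1⁆, hzcen0, hzord0, ha2, hb2, hKab⟩
  have hz2 : z ^ 2 = 1 := by rw [← hzord]; exact pow_orderOf_eq_one z
  have hzne : z ≠ 1 := fun h => by rw [h, orderOf_one] at hzord; norm_num at hzord
  have hzz : z * z = 1 := by rw [← pow_two, hz2]
  have hzinv : z⁻¹ = z := inv_eq_of_mul_eq_one_left hzz
  have ha4 : a ^ 4 = 1 := by rw [show (4:ℕ) = 2*2 from rfl, pow_mul, ha2, hz2]
  have hb4 : b ^ 4 = 1 := by rw [show (4:ℕ) = 2*2 from rfl, pow_mul, hb2, hz2]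
  have haT : ∃ e, a ^ 2 ^ e = 1 := ⟨2, by rw [show (2:ℕ)^2 = 4 from rfl, ha4]⟩
  have hbT : ∃ e, b ^ 2 ^ e = 1 := ⟨2, by rw [show (2:ℕ)^2 = 4 from rfl, hb4]⟩
  have hKba : ⁅b, a⁆ = z := by
    rw [← commutatorElement_inv, hKab, hzinv]
  have hKab_ne : ⁅a, b⁆ ≠ 1 := by rw [hKab]; exact hzne
  -- uniqueness of the involution
  have invuniq : ∀ w : ↥N, w ^ 2 = 1 → w = 1 ∨ w = z := by
    intro w hw
    have hw2 : w ^ 2 ^ 1 = 1 := by rwa [pow_one]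
    have hz21 : z ^ 2 ^ 1 = 1 := by rwa [pow_one]
    rcases cyclic_compare' hcyc Nat.prime_two ((hzcen w).symm.eq) hw2 hz21 with ⟨k, hk⟩ | ⟨k, hk⟩
    · rw [pow_eq_pow_mod k hz2] at hk
      rcases Nat.mod_two_eq_zero_or_one k with h | h
      · left; rw [← hk, h, pow_zero]
      · right; rw [← hk, h, pow_one]
    · rw [pow_eq_pow_mod k hw] at hk
      rcases Nat.mod_two_eq_zero_or_one k with h | h
      · exfalso; rw [h, pow_zero] at hk; exact hzne hk.symm
      · right; rw [h, pow_one] at hk; exact hk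
  -- the subgroup generated by a and b
  set Hgrp := Subgroup.closure ({a, b} : Set ↥N) with hHgrp
  have haH : a ∈ Hgrp := Subgroup.subset_closure (by simp)
  have hbH : b ∈ Hgrp := Subgroup.subset_closure (by simp)
  have hzH : z ∈ Hgrp := by rw [← ha2]; exact pow_mem haH 2
  -- every 2-element lies in Hgrp
  have S2R : ∀ g : ↥N, (∃ e, g ^ 2 ^ e = 1) → g ∈ Hgrp := by
    intro g hgT
    have hw1 : ⁅g, a⁆ = 1 ∨ ⁅g, a⁆ = z := by
      apply invuniq
      rw [← K_pow_right hc, ha2]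
      exact commutatorElement_eq_one_iff_commute.2 (hzcen g).symm
    have hw2 : ⁅g, b⁆ = 1 ∨ ⁅g, b⁆ = z := by
      apply invuniq
      rw [← K_pow_right hc, hb2]
      exact commutatorElement_eq_one_iff_commute.2 (hzcen g).symm
    obtain ⟨h₀, hh₀H, hh₀T, hca, hcb⟩ :
        ∃ h₀ : ↥N, h₀ ∈ Hgrp ∧ (∃ e, h₀ ^ 2 ^ e = 1) ∧ ⁅g * h₀, a⁆ = 1 ∧ ⁅g * h₀, b⁆ = 1 := by
      rcases hw1 with h1 | h1 <;> rcases hw2 with h2 | h2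
      · exact ⟨1, one_mem _, ⟨0, by norm_num⟩,
          by rw [K_mul_left hc, h1, commutatorElement_one_left, one_mul],
          by rw [K_mul_left hc, h2, commutatorElement_one_left, one_mul]⟩
      · exact ⟨a, haH, haT,
          by rw [K_mul_left hc, h1, commutatorElement_self, one_mul],
          by rw [K_mul_left hc, h2, hKab, hzz]⟩
      · exact ⟨b, hbH, hbT,
          by rw [K_mul_left hc, h1, hKba, hzz],
          by rw [K_mul_left hc, h2, commutatorElement_self, one_mul]⟩
      · exact ⟨a * b, mul_mem haH hbH, tw_mul hc haT hbT,
          by rw [K_mul_left hc, K_mul_left hc, h1, commutatorElement_self, one_mul, hKba, hzz],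
          by rw [K_mul_left hc, K_mul_left hc, h2, hKab, commutatorElement_self, mul_one, hzz]⟩
    have hg'T : ∃ e, (g * h₀) ^ 2 ^ e = 1 := tw_mul hc hgT hh₀T
    have hg'a : Commute (g * h₀) a := commutatorElement_eq_one_iff_commute.1 hca
    have hg'b : Commute (g * h₀) b := commutatorElement_eq_one_iff_commute.1 hcb
    have hg'2 : (g * h₀) ^ 2 = 1 := by
      by_contra hne
      obtain ⟨e, he⟩ := hg'T
      obtain ⟨k, hk, hordg'⟩ := (Nat.dvd_prime_pow Nat.prime_two).1 (orderOf_dvd_of_pow_eq_one he)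
      have hk2 : 2 ≤ k := by
        by_contra hlt
        push_neg at hlt
        interval_cases k
        · rw [pow_zero] at hordg'
          exact hne (by rw [orderOf_eq_one_iff.mp hordg', one_pow])
        · rw [pow_one] at hordg'
          exact hne (by rw [← hordg']; exact pow_orderOf_eq_one _)
      set u := (g * h₀) ^ 2 ^ (k - 2) with hu
      have hu4 : u ^ 4 = 1 := by
        rw [hu, ← pow_mul, show 2 ^ (k-2) * 4 = 2 ^ k from by
          rw [show (4:ℕ) = 2^2 from rfl, ← pow_add]; congr 1; omega,
          ← hordg', pow_orderOf_eq_one]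
      have hu2ne : u ^ 2 ≠ 1 := by
        rw [hu, ← pow_mul]
        apply pow_ne_one_of_lt_orderOf
        · positivity
        · rw [hordg', show 2 ^ (k-2) * 2 = 2 ^ (k-1) from by rw [← pow_succ]; congr 1; omega]
          exact Nat.pow_lt_pow_right (by norm_num) (by omega)
      have hu2z : u ^ 2 = z := by
        rcases invuniq (u ^ 2) (by rw [← pow_mul]; exact hu4) with h | h
        · exact absurd h hu2ne
        · exact h
      have hua : Commute u a := hg'a.pow_left _
      have hub : Commute u b := hg'b.pow_left _
      have hu22 : u ^ 2 ^ 2 = 1 := by rw [show (2:ℕ)^2 = 4 from rfl]; exact hu4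
      have ha22 : a ^ 2 ^ 2 = 1 := by rw [show (2:ℕ)^2 = 4 from rfl]; exact ha4
      rcases cyclic_compare' hcyc Nat.prime_two hua.eq hu22 ha22 with ⟨k', hk'⟩ | ⟨k', hk'⟩
      · -- a ^ k' = u
        have h1 : ⁅u, b⁆ = 1 := commutatorElement_eq_one_iff_commute.2 hub
        rw [← hk', K_pow_left hc, hKab] at h1
        have hk'even : k' % 2 = 0 := by
          rcases Nat.mod_two_eq_zero_or_one k' with h | h
          · exact h
          · exfalso; rw [pow_eq_pow_mod k' hz2, h, pow_one] at h1; exact hzne h1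
        apply hu2ne
        rw [← hk', ← pow_mul, mul_comm k' 2, pow_mul, ha2, pow_eq_pow_mod k' hz2, hk'even,
          pow_zero]
      · -- u ^ k' = a
        apply hKab_ne
        apply commutatorElement_eq_one_iff_commute.2
        rw [← hk']
        exact hub.pow_left k'
    rcases invuniq _ hg'2 with h | h
    · have hg : g = h₀⁻¹ := eq_inv_of_mul_eq_one_left h
      rw [hg]; exact inv_mem hh₀H
    · have hg : g = z * h₀⁻¹ := eq_mul_inv_of_mul_eq h
      rw [hg]; exact mul_mem hzH (inv_mem hh₀H)
  -- relations for the quaternion homomorphism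
  have hbab : b * a * b⁻¹ = a⁻¹ := by
    have h1 : b * a * b⁻¹ * a⁻¹ = z := hKba
    have h2 : b * a * b⁻¹ = z * a := by
      have h3 := congrArg (fun t => t * a) h1
      simpa [mul_assoc] using h3
    rw [h2, ← ha2, ← pow_succ]
    apply eq_inv_of_mul_eq_one_left
    rw [← pow_succ, ha4]
  have hconj : ∀ m : ℕ, b * a ^ m = (a ^ m)⁻¹ * b := by
    have h1 : ∀ m : ℕ, b * a ^ m * b⁻¹ = (a ^ m)⁻¹ := by
      intro m
      induction m with
      | zero => simp
      | succ n ih =>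
        calc b * a ^ (n+1) * b⁻¹ = (b * a ^ n * b⁻¹) * (b * a * b⁻¹) := by
              rw [pow_succ]; group
          _ = (a ^ n)⁻¹ * a⁻¹ := by rw [ih, hbab]
          _ = (a ^ (n+1))⁻¹ := by rw [pow_succ', mul_inv_rev]
    intro m
    have h2 := congrArg (fun t => t * b) (h1 m)
    simpa [mul_assoc] using h2
  have hφadd : ∀ i j : ZMod (2*2), a ^ (i + j).val = a ^ i.val * a ^ j.val := by
    intro i j
    rw [ZMod.val_add, ← pow_eq_pow_mod _ ha4, pow_add]
  have hφneg : ∀ i : ZMod (2*2), a ^ (-i).val = (a ^ i.val)⁻¹ := by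
    intro i
    apply eq_inv_of_mul_eq_one_left
    rw [← hφadd, neg_add_cancel]
    simp [ZMod.val_zero]
  have hbφ : ∀ i : ZMod (2*2), b * a ^ i.val = a ^ (-i).val * b := by
    intro i; rw [hφneg, hconj]
  have hφb : ∀ i : ZMod (2*2), a ^ i.val * b = b * a ^ (-i).val := by
    intro i
    have h := hbφ (-i)
    rw [neg_neg] at h
    exact h.symm
  -- the homomorphism from the quaternion group
  let f : QuaternionGroup 2 →* ↥N := MonoidHom.mk'
    (fun x => match x with
      | QuaternionGroup.a i => a ^ i.val
      | QuaternionGroup.xa i => b * a ^ i.val)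
    (by
      rintro (i | i) (j | j)
      · rw [QuaternionGroup.a_mul_a]
        exact hφadd i j
      · rw [QuaternionGroup.a_mul_xa]
        show b * a ^ (j - i).val = a ^ i.val * (b * a ^ j.val)
        rw [show (j - i : ZMod (2*2)) = -i + j from by ring, hφadd, ← mul_assoc,
          show b * a ^ (-i).val = a ^ i.val * b from by rw [hbφ (-i), neg_neg], mul_assoc]
      · rw [QuaternionGroup.xa_mul_a]
        show b * a ^ (i + j).val = b * a ^ i.val * a ^ j.val
        rw [hφadd, mul_assoc]
      · rw [QuaternionGroup.xa_mul_xa]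
        show a ^ (((2:ℕ) : ZMod (2*2)) + j - i).val = (b * a ^ i.val) * (b * a ^ j.val)
        have hc2 : a ^ (((2:ℕ) : ZMod (2*2))).val = z := by
          rw [show (((2:ℕ) : ZMod (2*2))).val = 2 from by decide]
          exact ha2
        rw [show ((2:ℕ) : ZMod (2*2)) + j - i = ((2:ℕ) : ZMod (2*2)) + (-i + j) from by ring,
          hφadd, hφadd, hc2]
        rw [show (b * a ^ i.val) * (b * a ^ j.val) = b * ((a ^ i.val * b) * a ^ j.val) from by
          simp only [mul_assoc], hφb i,
          show b * ((b * a ^ (-i).val) * a ^ j.val) = (b * b) * (a ^ (-i).val * a ^ j.val) from by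
          simp only [mul_assoc],
          show b * b = z from by rw [← pow_two, hb2]])
  have horda : orderOf a = 4 := by
    have hdvd : orderOf a ∣ 2 ^ 2 := orderOf_dvd_of_pow_eq_one
      (by rw [show (2:ℕ)^2 = 4 from rfl]; exact ha4)
    have ha2ne : a ^ 2 ≠ 1 := by rw [ha2]; exact hzne
    obtain ⟨t, ht, hordt⟩ := (Nat.dvd_prime_pow Nat.prime_two).1 hdvd
    interval_cases t
    · exfalso; rw [pow_zero] at hordt
      exact ha2ne (by rw [orderOf_eq_one_iff.mp hordt, one_pow])
    · exfalso; rw [pow_one] at hordt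
      exact ha2ne (by rw [← hordt]; exact pow_orderOf_eq_one a)
    · rw [hordt]; norm_num
  have hfker : ∀ v : QuaternionGroup 2, f v = 1 → v = 1 := by
    intro v hv
    rcases v with i | i
    · have h4 : (4:ℕ) ∣ i.val := by rw [← horda]; exact orderOf_dvd_of_pow_eq_one hv
      have hlt : i.val < 4 := i.val_lt
      have h0 : i.val = 0 := Nat.eq_zero_of_dvd_of_lt h4 (by omega)
      rw [QuaternionGroup.one_def]
      congr 1
      exact (ZMod.val_eq_zero i).mp h0
    · exfalso
      have hb' : b = (a ^ i.val)⁻¹ := eq_inv_of_mul_eq_one_left hv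
      apply hKab_ne
      rw [hb', K_inv_right hc, K_pow_right hc, commutatorElement_self, one_pow, inv_one]
  -- the odd part
  let Ogrp : Subgroup ↥N :=
    { carrier := {g : ↥N | ∃ m, Odd m ∧ g ^ m = 1}
      mul_mem' := fun hu hv => od_mul hc hu hv
      one_mem' := ⟨1, odd_one, one_pow 1⟩
      inv_mem' := fun hu => od_inv hu }
  have hOmem : ∀ g : ↥N, g ∈ Ogrp ↔ ∃ m, Odd m ∧ g ^ m = 1 := fun g => Iff.rfl
  have hOcomm : ∀ u ∈ Ogrp, ∀ v ∈ Ogrp, u * v = v * u := by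
    intro u hu v hv
    have h1 := comm_tw hc hcyc u v
    have h2 : ∃ m, Odd m ∧ ⁅u, v⁆ ^ m = 1 := by
      obtain ⟨m, hmo, hm⟩ := hu
      exact ⟨m, hmo, by rw [← K_pow_left hc, hm, commutatorElement_one_left]⟩
    exact (commutatorElement_eq_one_iff_commute.1 (tw_od_eq_one h1 h2)).eq
  haveI : IsCyclic ↥Ogrp := subgroup_comm_cyclic N Ogrp hOcomm
  obtain ⟨g₀, hg₀⟩ := IsCyclic.exists_generator (α := ↥Ogrp)
  set gg : ↥N := (g₀ : ↥N) with hgg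
  have hggO : gg ∈ Ogrp := g₀.2
  set nn := orderOf gg with hnn
  haveI : NeZero nn := ⟨(orderOf_pos gg).ne'⟩
  have hggpow : gg ^ nn = 1 := pow_orderOf_eq_one gg
  have hgadd : ∀ i j : ZMod nn, gg ^ (i + j).val = gg ^ i.val * gg ^ j.val := by
    intro i j
    rw [ZMod.val_add, ← pow_eq_pow_mod _ hggpow, pow_add]
  have hfT : ∀ v : QuaternionGroup 2, ∃ e, (f v) ^ 2 ^ e = 1 := by
    intro v
    rcases v with i | i
    · exact tw_pow _ haT
    · exact tw_mul hc hbT (tw_pow _ haT)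
  -- the combined homomorphism
  let F : QuaternionGroup 2 × Multiplicative (ZMod nn) →* ↥N := MonoidHom.mk'
    (fun p => f p.1 * gg ^ (Multiplicative.toAdd p.2).val)
    (by
      rintro ⟨u1, m1⟩ ⟨u2, m2⟩
      show f (u1 * u2) * gg ^ (Multiplicative.toAdd (m1 * m2)).val
          = (f u1 * gg ^ (Multiplicative.toAdd m1).val) * (f u2 * gg ^ (Multiplicative.toAdd m2).val)
      have htoadd : Multiplicative.toAdd (m1 * m2)
          = Multiplicative.toAdd m1 + Multiplicative.toAdd m2 := rfl
      rw [map_mul, htoadd, hgadd]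
      have hswap : f u2 * gg ^ (Multiplicative.toAdd m1).val
          = gg ^ (Multiplicative.toAdd m1).val * f u2 :=
        tw_od_commute hc (hfT u2) (od_pow _ hggO)
      calc f u1 * f u2 * (gg ^ (Multiplicative.toAdd m1).val * gg ^ (Multiplicative.toAdd m2).val)
          = f u1 * ((f u2 * gg ^ (Multiplicative.toAdd m1).val) * gg ^ (Multiplicative.toAdd m2).val) := by
            simp only [mul_assoc]
        _ = f u1 * ((gg ^ (Multiplicative.toAdd m1).val * f u2) * gg ^ (Multiplicative.toAdd m2).val) := by
            rw [hswap]
        _ = f u1 * gg ^ (Multiplicative.toAdd m1).val * (f u2 * gg ^ (Multiplicative.toAdd m2).val) := by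
            simp only [mul_assoc])
  have hFinj : Function.Injective F := by
    rw [injective_iff_map_eq_one]
    rintro ⟨v, m⟩ hvm
    have hvm' : f v * gg ^ (Multiplicative.toAdd m).val = 1 := hvm
    have hfv : f v = (gg ^ (Multiplicative.toAdd m).val)⁻¹ := eq_inv_of_mul_eq_one_left hvm'
    have hfvO : f v ∈ Ogrp := by
      rw [hfv]
      exact Ogrp.inv_mem (Ogrp.pow_mem hggO _)
    have hfv1 : f v = 1 := tw_od_eq_one (hfT v) hfvO
    have hv1 : v = 1 := hfker v hfv1
    have hg1 : gg ^ (Multiplicative.toAdd m).val = 1 := by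
      rw [hfv1, one_mul] at hvm'; exact hvm'
    have hm0 : (Multiplicative.toAdd m).val = 0 :=
      Nat.eq_zero_of_dvd_of_lt (orderOf_dvd_of_pow_eq_one hg1) (ZMod.val_lt _)
    have hm1 : m = 1 := by
      have h := (ZMod.val_eq_zero _).mp hm0
      exact Multiplicative.toAdd.injective (by rw [h, toAdd_one])
    rw [Prod.ext_iff]
    exact ⟨hv1, hm1⟩
  have hFsurj : Function.Surjective F := by
    intro w
    obtain ⟨w1, w2, hw12, _, _, ⟨e, hwe⟩, ⟨m, hmnd, hwm, hmne⟩⟩ := primary_part Nat.prime_two w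
    have hw1H : w1 ∈ Hgrp := S2R w1 ⟨e, hwe⟩
    have hw2O : w2 ∈ Ogrp := ⟨m, Nat.odd_iff.mpr (Nat.two_dvd_ne_zero.mp hmnd), hwm⟩
    have hHrange : Hgrp ≤ f.range := by
      rw [hHgrp]
      apply (Subgroup.closure_le _).2
      intro t ht
      rcases Set.mem_insert_iff.mp ht with h | ht2
      · refine ⟨QuaternionGroup.a 1, ?_⟩
        show a ^ (1 : ZMod (2*2)).val = t
        rw [show (1 : ZMod (2*2)).val = 1 from by decide, pow_one]
        exact h.symm
      · rw [Set.mem_singleton_iff] at ht2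
        refine ⟨QuaternionGroup.xa 0, ?_⟩
        show b * a ^ (0 : ZMod (2*2)).val = t
        rw [show (0 : ZMod (2*2)).val = 0 from by decide, pow_zero, mul_one]
        exact ht2.symm
    obtain ⟨v, hv⟩ := hHrange hw1H
    obtain ⟨kz, hkz⟩ := Subgroup.mem_zpowers_iff.mp (hg₀ ⟨w2, hw2O⟩)
    have hkz' : gg ^ kz = w2 := by
      have h := congrArg Subtype.val hkz
      rwa [SubgroupClass.coe_zpow] at h
    obtain ⟨k, hk⟩ := mem_pows_of_zpow kz hkz'
    refine ⟨(v, Multiplicative.ofAdd ((k : ZMod nn))), ?_⟩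
    show f v * gg ^ (Multiplicative.toAdd (Multiplicative.ofAdd ((k : ZMod nn)))).val = w
    rw [show Multiplicative.toAdd (Multiplicative.ofAdd ((k : ZMod nn))) = ((k : ZMod nn)) from rfl,
      ZMod.val_natCast, ← pow_eq_pow_mod k hggpow, hv, hk]
    exact hw12.symm
  exact ⟨Multiplicative (ZMod nn), inferInstance, inferInstance,
    ⟨(MulEquiv.ofBijective F ⟨hFinj, hFsurj⟩).symm⟩⟩
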